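/- If C_b(I × J, ℝ) equals the uniform closure of the linear span of {(t,s) ↦ g(t)h(s) : g ∈ C_b(I, ℝ), h ∈ C_b(J, ℝ)}, where I and J are completely regular Hausdorff spaces, then β(I × J) = βI × βJ, i.e., every f ∈ C_b(I × J, ℝ) extends to a continuous function on βI × βJ. -/

import Mathlib

open scoped Topology

lemma extend_bdd {I : Type*} [TopologicalSpace I] (u : I → ℝ) (hu : Continuous u)
    (hb : Bornology.IsBounded (Set.range u)) :
    ∃ U : StoneCech I → ℝ, Continuous U ∧ ∀ t, U (stoneCechUnit t) = u t := by
  obtain ⟨r, hr⟩ := (Metric.isBounded_iff_subset_closedBall 0).mp hb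
  have hK : IsCompact (Metric.closedBall (0:ℝ) r) := isCompact_closedBall _ _
  haveI : CompactSpace (Metric.closedBall (0:ℝ) r) := isCompact_iff_compactSpace.mp hK
  let u' : I → Metric.closedBall (0:ℝ) r := fun t => ⟨u t, hr ⟨t, rfl⟩⟩
  have hu' : Continuous u' := hu.subtype_mk _
  refine ⟨Subtype.val ∘ stoneCechExtend hu',
    continuous_subtype_val.comp (continuous_stoneCechExtend hu'), fun t => ?_⟩
  have := congrFun (stoneCechExtend_extends hu') t
  simp only [Function.comp_apply] at this
  simp [Function.comp_apply, this, u']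

lemma extend_span {I J : Type*} [TopologicalSpace I] [TopologicalSpace J]
    (g : I × J → ℝ)
    (hg : g ∈ Submodule.span ℝ {h : I × J → ℝ | ∃ (u : I → ℝ) (v : J → ℝ),
      Continuous u ∧ Bornology.IsBounded (Set.range u) ∧
      Continuous v ∧ Bornology.IsBounded (Set.range v) ∧
        h = fun q => u q.1 * v q.2}) :
    ∃ G : StoneCech I × StoneCech J → ℝ, Continuous G ∧
      ∀ q : I × J, G (stoneCechUnit q.1, stoneCechUnit q.2) = g q := by
  induction hg using Submodule.span_induction with
  | mem x hx =>
      obtain ⟨u, v, hu, hbu, hv, hbv, rfl⟩ := hx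
      obtain ⟨U, hU, hUe⟩ := extend_bdd u hu hbu
      obtain ⟨V, hV, hVe⟩ := extend_bdd v hv hbv
      exact ⟨fun p => U p.1 * V p.2, (hU.comp continuous_fst).mul (hV.comp continuous_snd),
        fun q => by simp [hUe, hVe]⟩
  | zero => exact ⟨0, continuous_const, fun q => rfl⟩
  | add x y hx hy ihx ihy =>
      obtain ⟨G₁, hG₁, he₁⟩ := ihx
      obtain ⟨G₂, hG₂, he₂⟩ := ihy
      exact ⟨G₁ + G₂, hG₁.add hG₂, fun q => by simp [he₁, he₂]⟩
  | smul a x hx ihx =>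
      obtain ⟨G₁, hG₁, he₁⟩ := ihx
      exact ⟨a • G₁, hG₁.const_smul a, fun q => by simp [he₁]⟩

theorem stmt_16 {I J : Type*} [TopologicalSpace I] [CompletelyRegularSpace I]
    [T2Space I] [TopologicalSpace J] [CompletelyRegularSpace J] [T2Space J]
    (hdense : ∀ f : I × J → ℝ, Continuous f →
      Bornology.IsBounded (Set.range f) → ∀ ε > (0 : ℝ),
        ∃ g ∈ Submodule.span ℝ {h : I × J → ℝ | ∃ (u : I → ℝ) (v : J → ℝ),
          Continuous u ∧ Bornology.IsBounded (Set.range u) ∧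
          Continuous v ∧ Bornology.IsBounded (Set.range v) ∧
            h = fun q => u q.1 * v q.2},
          ∀ q : I × J, |f q - g q| < ε) :
    ∀ f : I × J → ℝ, Continuous f → Bornology.IsBounded (Set.range f) →
      ∃ F : StoneCech I × StoneCech J → ℝ, Continuous F ∧
        ∀ q : I × J, F (stoneCechUnit q.1, stoneCechUnit q.2) = f q := by
  intro f hf hbf
  -- choose approximations
  have hchoice : ∀ n : ℕ, ∃ G : C(StoneCech I × StoneCech J, ℝ),
      ∀ q : I × J, |f q - G (stoneCechUnit q.1, stoneCechUnit q.2)| < 1 / (n + 1) := by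
    intro n
    obtain ⟨g, hgmem, hgapp⟩ := hdense f hf hbf (1 / (n + 1))
      (by positivity)
    obtain ⟨G, hGc, hGe⟩ := extend_span g hgmem
    exact ⟨⟨G, hGc⟩, fun q => by simpa [hGe] using hgapp q⟩
  choose G hG using hchoice
  -- dense range of product unit
  have hdr : DenseRange (fun q : I × J => (stoneCechUnit q.1, stoneCechUnit q.2)) := by
    have := DenseRange.prodMap (denseRange_stoneCechUnit : DenseRange (stoneCechUnit : I → StoneCech I))
      (denseRange_stoneCechUnit : DenseRange (stoneCechUnit : J → StoneCech J))
    exact this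
  -- Cauchy estimate
  have hdist : ∀ n m : ℕ, dist (G n) (G m) ≤ 1 / (n + 1) + 1 / (m + 1) := by
    intro n m
    rw [ContinuousMap.dist_le (by positivity)]
    intro x
    have hclosed : IsClosed {y : StoneCech I × StoneCech J |
        dist (G n y) (G m y) ≤ 1 / (n + 1) + 1 / (m + 1)} :=
      isClosed_le (by continuity) continuous_const
    have hsub : Set.range (fun q : I × J => (stoneCechUnit q.1, stoneCechUnit q.2)) ⊆
        {y | dist (G n y) (G m y) ≤ 1 / (n + 1) + 1 / (m + 1)} := by
      rintro _ ⟨q, rfl⟩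
      have h1 := (hG n q).le
      have h2 := (hG m q).le
      simp only [Set.mem_setOf_eq, Real.dist_eq]
      have heq : G n (stoneCechUnit q.1, stoneCechUnit q.2) -
          G m (stoneCechUnit q.1, stoneCechUnit q.2) =
          -(f q - G n (stoneCechUnit q.1, stoneCechUnit q.2)) +
          (f q - G m (stoneCechUnit q.1, stoneCechUnit q.2)) := by ring
      rw [heq]
      exact (abs_add_le _ _).trans (by rw [abs_neg]; exact add_le_add h1 h2)
    have hx : x ∈ closure (Set.range (fun q : I × J =>
        (stoneCechUnit q.1, stoneCechUnit q.2))) := by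
      rw [hdr.closure_range]; trivial
    have := closure_mono hsub hx
    rwa [hclosed.closure_eq] at this
  -- Cauchy sequence
  have hcauchy : CauchySeq G := by
    apply cauchySeq_of_le_tendsto_0 (fun N : ℕ => 2 / (N + 1))
    · intro n m N hn hm
      refine (hdist n m).trans ?_
      have h1 : (1 : ℝ) / (n + 1) ≤ 1 / (N + 1) := by
        apply one_div_le_one_div_of_le (by positivity)
        exact_mod_cast Nat.succ_le_succ hn
      have h2 : (1 : ℝ) / (m + 1) ≤ 1 / (N + 1) := by
        apply one_div_le_one_div_of_le (by positivity)
        exact_mod_cast Nat.succ_le_succ hm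
      calc (1:ℝ) / (n + 1) + 1 / (m + 1) ≤ 1 / (N + 1) + 1 / (N + 1) := add_le_add h1 h2
        _ = 2 / (N + 1) := by ring
    · have := tendsto_one_div_add_atTop_nhds_zero_nat (𝕜 := ℝ)
      have h2 := this.const_mul (2:ℝ)
      simpa [mul_one_div, div_eq_mul_inv] using h2
  obtain ⟨F, hF⟩ := cauchySeq_tendsto_of_complete hcauchy
  refine ⟨F, F.continuous, fun q => ?_⟩
  set p := (stoneCechUnit q.1, stoneCechUnit q.2)
  have hev : Filter.Tendsto (fun n => G n p) Filter.atTop (𝓝 (F p)) :=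
    ((continuous_eval_const p).tendsto F).comp hF
  have hfq : Filter.Tendsto (fun n => G n p) Filter.atTop (𝓝 (f q)) := by
    rw [tendsto_iff_dist_tendsto_zero]
    apply squeeze_zero (fun n => dist_nonneg) (fun n => ?_)
      tendsto_one_div_add_atTop_nhds_zero_nat
    rw [Real.dist_eq, abs_sub_comm]
    exact (hG n q).le
  exact tendsto_nhds_unique hev hfq
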